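/- Let n ≥ 5 and let U be a subgroup of index n in the alternating group A_n. Then there exists an automorphism α of A_n such that α(U) = V₁, where V₁ = {g ∈ A_n : g fixes the point 1} is the point stabilizer, which is isomorphic to A_{n-1}. -/

import Mathlib

open Equiv Equiv.Perm Subgroup

namespace Stmt3Aux

/-- Bundled `permCongr` as a `MulEquiv`. -/
def permCongrHom {β γ : Type} (e : β ≃ γ) : Perm β ≃* Perm γ where
  toFun p := e.permCongr p
  invFun p := e.symm.permCongr p
  left_inv p := by ext x; simp
  right_inv p := by ext x; simp
  map_mul' p q := by ext x; simp [Perm.mul_apply]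

theorem permCongrHom_apply {β γ : Type} (e : β ≃ γ) (p : Perm β) (x : γ) :
    (permCongrHom e p) x = e (p (e.symm x)) := rfl

variable {β γ : Type} [DecidableEq β] [Fintype β] [DecidableEq γ] [Fintype γ]

def altCongr (e : β ≃ γ) : alternatingGroup β ≃* alternatingGroup γ where
  toFun g := ⟨e.permCongr g, by
    rw [mem_alternatingGroup, sign_permCongr]; exact g.2⟩
  invFun g := ⟨e.symm.permCongr g, by
    rw [mem_alternatingGroup, sign_permCongr]; exact g.2⟩
  left_inv g := by ext x; simp
  right_inv g := by ext x; simp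
  map_mul' g h := by ext x; simp [Perm.mul_apply]





def stabHom (a : β) :
    alternatingGroup {x : β // x ≠ a} →* MulAction.stabilizer (alternatingGroup β) a where
  toFun f := ⟨⟨Equiv.Perm.ofSubtype (f : Perm {x : β // x ≠ a}), by
      rw [mem_alternatingGroup, sign_ofSubtype]; exact f.2⟩, by
      rw [MulAction.mem_stabilizer_iff]
      show Equiv.Perm.ofSubtype (f : Perm {x : β // x ≠ a}) • a = a
      rw [Perm.smul_def]
      exact ofSubtype_apply_of_not_mem _ (by simp)⟩
  map_one' := by
    ext x
    simp
  map_mul' f g := by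
    ext x
    simp [Perm.mul_apply]

theorem stabHom_bijective (a : β) : Function.Bijective (stabHom a) := by
  constructor
  · intro f g hfg
    rw [Subtype.ext_iff, Subtype.ext_iff] at hfg
    have h : Equiv.Perm.ofSubtype (f : Perm {x : β // x ≠ a})
        = Equiv.Perm.ofSubtype (g : Perm {x : β // x ≠ a}) := hfg
    ext x
    have := congrArg (fun p : Perm β => p (x : β)) h
    simpa only [ofSubtype_apply_coe] using this
  · rintro ⟨g, hg⟩
    have hga : (g : Perm β) a = a := by
      have := (MulAction.mem_stabilizer_iff).mp hg
      rwa [Subgroup.smul_def, Perm.smul_def] at this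
    have hinv : ∀ x : β, x ≠ a ↔ (g : Perm β) x ≠ a := by
      intro x
      constructor
      · intro hx h
        exact hx ((g : Perm β).injective (h.trans hga.symm))
      · intro h hx
        exact h (hx ▸ hga)
    set f : Perm {x : β // x ≠ a} := Equiv.Perm.subtypePerm (g : Perm β) (fun x => (hinv x).symm) with hf
    have hof : Equiv.Perm.ofSubtype f = (g : Perm β) := by
      apply ofSubtype_subtypePerm
      intro x hx
      intro h
      exact hx (by rw [h, hga])
    have hfs : f ∈ alternatingGroup {x : β // x ≠ a} := by
      rw [mem_alternatingGroup, ← sign_ofSubtype, hof]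
      exact g.2
    refine ⟨⟨f, hfs⟩, ?_⟩
    ext x
    simp [stabHom, hof]

noncomputable def stabEquiv (a : β) :
    MulAction.stabilizer (alternatingGroup β) a ≃* alternatingGroup {x : β // x ≠ a} :=
  (MulEquiv.ofBijective _ (stabHom_bijective a)).symm





theorem exists_two_outside (S : Finset β) (h : S.card + 2 ≤ Fintype.card β) :
    ∃ c d : β, c ≠ d ∧ c ∉ S ∧ d ∉ S := by
  have h2 : 1 < Sᶜ.card := by
    rw [Finset.card_compl]; omega
  obtain ⟨c, hc, d, hd, hcd⟩ := Finset.one_lt_card.mp h2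
  exact ⟨c, d, hcd, by simpa using hc, by simpa using hd⟩

theorem exists_fixing (h6 : 6 ≤ Fintype.card β) (N : Subgroup (alternatingGroup β))
    (hN : N.Normal) {σ : alternatingGroup β} (hσN : σ ∈ N) (hσ1 : σ ≠ 1) :
    ∃ g ∈ N, g ≠ 1 ∧ ∃ a : β, (g : Perm β) a = a := by
  set s : Perm β := (σ : Perm β) with hs
  by_cases hfix : ∃ a, s a = a
  · exact ⟨σ, hσN, hσ1, hfix⟩
  push_neg at hfix
  by_cases h2 : ∃ a, s (s a) ≠ a
  · -- case A
    obtain ⟨a, ha2⟩ := h2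
    set b := s a with hb
    have hab : a ≠ b := fun h => (hfix a) h.symm
    obtain ⟨c, d, hcd, hc, hd⟩ := exists_two_outside {a, b, s b, s⁻¹ a} (by
      have h1 := Finset.card_insert_le a ({b, s b, s⁻¹ a} : Finset β)
      have h2 := Finset.card_insert_le b ({s b, s⁻¹ a} : Finset β)
      have h3 := Finset.card_insert_le (s b) ({s⁻¹ a} : Finset β)
      have h4 : ({s⁻¹ a} : Finset β).card = 1 := Finset.card_singleton _
      omega)
    simp only [Finset.mem_insert, Finset.mem_singleton, not_or] at hc hd
    obtain ⟨hca, hcb, hcsb, hcsa⟩ := hc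
    obtain ⟨hda, hdb, hdsb, hdsa⟩ := hd
    have hbc : b ≠ c := Ne.symm hcb
    have hτA : (Equiv.swap b c * Equiv.swap c d) ∈ alternatingGroup β := by
      rw [mem_alternatingGroup, map_mul, sign_swap hbc, sign_swap hcd]
      norm_num
    have hsab : s⁻¹ a ≠ b := by
      intro h
      exact ha2 (by rw [← h, Perm.inv_def, Equiv.apply_symm_apply])
    refine ⟨σ * ⟨_, hτA⟩ * σ⁻¹ * (⟨_, hτA⟩ : alternatingGroup β)⁻¹, ?_, ?_, a, ?_⟩
    · have h₁ : (⟨_, hτA⟩ : alternatingGroup β) * σ⁻¹ * (⟨_, hτA⟩ : alternatingGroup β)⁻¹ ∈ N :=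
        hN.conj_mem _ (N.inv_mem hσN) _
      have := N.mul_mem hσN h₁
      simpa [mul_assoc] using this
    · -- not one : moves s b to s c
      intro h
      have hval : ((σ * ⟨_, hτA⟩ * σ⁻¹ * (⟨_, hτA⟩ : alternatingGroup β)⁻¹ :
          alternatingGroup β) : Perm β) (s b) = s c := by
        show (s * (Equiv.swap b c * Equiv.swap c d) * s⁻¹ *
          (Equiv.swap b c * Equiv.swap c d)⁻¹) (s b) = s c
        rw [mul_inv_rev, swap_inv, swap_inv]
        simp only [Perm.mul_apply]
        rw [Equiv.swap_apply_of_ne_of_ne (hfix b) (Ne.symm hcsb),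
          Equiv.swap_apply_of_ne_of_ne (Ne.symm hcsb) (Ne.symm hdsb),
          Perm.inv_def, Equiv.symm_apply_apply,
          Equiv.swap_apply_of_ne_of_ne (Ne.symm hcb) (Ne.symm hdb),
          Equiv.swap_apply_left]
      rw [h] at hval
      simp only [OneMemClass.coe_one, Perm.one_apply] at hval
      exact hcb (s.injective hval).symm
    · -- fixes a
      show (s * (Equiv.swap b c * Equiv.swap c d) * s⁻¹ *
        (Equiv.swap b c * Equiv.swap c d)⁻¹) a = a
      rw [mul_inv_rev, swap_inv, swap_inv]
      simp only [Perm.mul_apply]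
      rw [Equiv.swap_apply_of_ne_of_ne hab (Ne.symm hca),
        Equiv.swap_apply_of_ne_of_ne (Ne.symm hca) (Ne.symm hda),
        Equiv.swap_apply_of_ne_of_ne (Ne.symm hcsa) (Ne.symm hdsa),
        Equiv.swap_apply_of_ne_of_ne hsab (Ne.symm hcsa),
        Perm.inv_def, Equiv.apply_symm_apply]
  · -- case B : s is a fixed-point-free involution
    push_neg at h2
    have hinv : ∀ x : β, s⁻¹ x = s x := by
      intro x
      have hx : s (s x) = x := h2 x
      nth_rewrite 1 [← hx]
      rw [Perm.inv_def, Equiv.symm_apply_apply]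
    have : Nonempty β := Fintype.card_pos_iff.mp (by omega)
    obtain ⟨a⟩ := this
    set b := s a with hb
    have hab : a ≠ b := fun h => (hfix a) h.symm
    obtain ⟨c, c', hcc', hc, _⟩ := exists_two_outside {a, b} (by
      have h1 := Finset.card_insert_le a ({b} : Finset β)
      have h4 : ({b} : Finset β).card = 1 := Finset.card_singleton _
      omega)
    simp only [Finset.mem_insert, Finset.mem_singleton, not_or] at hc
    obtain ⟨hca, hcb⟩ := hc
    set d := s c with hd
    have hdc : d ≠ c := fun h => (hfix c) h
    have hda : d ≠ a := by
      intro h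
      apply hcb
      rw [hb, ← h, hd, h2]
    have hdb : d ≠ b := by
      intro h
      apply hca
      rw [← h2 c, ← hd, h, hb, h2]
    have hbc : b ≠ c := Ne.symm hcb
    have hτA : (Equiv.swap a b * Equiv.swap b c) ∈ alternatingGroup β := by
      rw [mem_alternatingGroup, map_mul, sign_swap hab, sign_swap hbc]
      norm_num
    obtain ⟨e, e', hee', he, _⟩ := exists_two_outside {a, b, c, d} (by
      have h1 := Finset.card_insert_le a ({b, c, d} : Finset β)
      have h2 := Finset.card_insert_le b ({c, d} : Finset β)
      have h3 := Finset.card_insert_le c ({d} : Finset β)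
      have h4 : ({d} : Finset β).card = 1 := Finset.card_singleton _
      omega)
    simp only [Finset.mem_insert, Finset.mem_singleton, not_or] at he
    obtain ⟨hea, heb, hec, hed⟩ := he
    refine ⟨σ * ⟨_, hτA⟩ * σ⁻¹ * (⟨_, hτA⟩ : alternatingGroup β)⁻¹, ?_, ?_, e, ?_⟩
    · have h₁ : (⟨_, hτA⟩ : alternatingGroup β) * σ⁻¹ * (⟨_, hτA⟩ : alternatingGroup β)⁻¹ ∈ N :=
        hN.conj_mem _ (N.inv_mem hσN) _
      have := N.mul_mem hσN h₁
      simpa [mul_assoc] using this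
    · -- not one : moves a to c
      intro h
      have hval : ((σ * ⟨_, hτA⟩ * σ⁻¹ * (⟨_, hτA⟩ : alternatingGroup β)⁻¹ :
          alternatingGroup β) : Perm β) a = c := by
        show (s * (Equiv.swap a b * Equiv.swap b c) * s⁻¹ *
          (Equiv.swap a b * Equiv.swap b c)⁻¹) a = c
        rw [mul_inv_rev, swap_inv, swap_inv]
        simp only [Perm.mul_apply]
        rw [Equiv.swap_apply_left, Equiv.swap_apply_left, hinv, ← hd,
          Equiv.swap_apply_of_ne_of_ne hdb hdc,
          Equiv.swap_apply_of_ne_of_ne hda hdb, hd, h2]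
      rw [h] at hval
      simp only [OneMemClass.coe_one, Perm.one_apply] at hval
      exact hca hval.symm
    · -- fixes e
      show (s * (Equiv.swap a b * Equiv.swap b c) * s⁻¹ *
        (Equiv.swap a b * Equiv.swap b c)⁻¹) e = e
      rw [mul_inv_rev, swap_inv, swap_inv]
      simp only [Perm.mul_apply]
      have hsea : s e ≠ a := by
        intro h
        apply heb
        rw [hb, ← h, h2]
      have hseb : s e ≠ b := by
        intro h
        apply hea
        rw [← h2 e, h, hb, h2]
      have hsec : s e ≠ c := by
        intro h
        apply hed
        rw [hd, ← h, h2]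
      rw [Equiv.swap_apply_of_ne_of_ne hea heb,
        Equiv.swap_apply_of_ne_of_ne heb hec, hinv,
        Equiv.swap_apply_of_ne_of_ne hseb hsec,
        Equiv.swap_apply_of_ne_of_ne hsea hseb, h2]



theorem transfer_simple {G H : Type*} [Group G] [Group H] (e : G ≃* H)
    (hH : ∀ M : Subgroup H, M.Normal → M ≠ ⊥ → M = ⊤)
    (N : Subgroup G) (hN : N.Normal) (hb : N ≠ ⊥) : N = ⊤ := by
  have hmap : (N.map e.toMonoidHom) = ⊤ := by
    apply hH
    · exact hN.map e.toMonoidHom e.surjective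
    · intro h
      apply hb
      have := Subgroup.map_injective (f := e.toMonoidHom) e.injective
      apply this
      rw [h, Subgroup.map_bot]
  have := Subgroup.map_injective (f := e.toMonoidHom) e.injective
  apply this
  rw [hmap, Subgroup.map_top_of_surjective _ e.surjective]

theorem card_ne : ∀ (β : Type) [inst : DecidableEq β] [inst2 : Fintype β] (a : β),
    Fintype.card {x : β // x ≠ a} = Fintype.card β - 1 := by
  intro β _ _ a
  have h1 : Fintype.card {x : β // x = a} = 1 := Fintype.card_subtype_eq a
  have := Fintype.card_subtype_compl (fun x : β => x = a)
  rw [h1] at this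
  exact this






theorem alt_simple_aux : ∀ (k : ℕ), 5 ≤ k → ∀ (β : Type) [DecidableEq β] [Fintype β],
    Fintype.card β = k → ∀ N : Subgroup (alternatingGroup β), N.Normal → N ≠ ⊥ → N = ⊤ := by
  intro k hk
  induction k, hk using Nat.le_induction with
  | base =>
    intro β _ _ hcard N hN hb
    have e : β ≃ Fin 5 := Fintype.equivFinOfCardEq hcard
    exact transfer_simple (altCongr e)
      (fun M hM hMb => hM.eq_bot_or_eq_top.resolve_left hMb) N hN hb
  | succ k hk IH =>
    intro β _ _ hcard N hN hb
    have h6 : 6 ≤ Fintype.card β := by omega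
    have h5 : 5 ≤ Fintype.card β := by omega
    obtain ⟨⟨σ, hσN⟩, hσ1'⟩ := Subgroup.ne_bot_iff_exists_ne_one.mp hb
    have hσ1 : σ ≠ 1 := fun h => hσ1' (Subtype.ext h)
    obtain ⟨g, hgN, hg1, a, hga⟩ := exists_fixing h6 N hN hσN hσ1
    set K := MulAction.stabilizer (alternatingGroup β) a with hK
    set Θ := stabEquiv a with hΘ
    have hgK : g ∈ K := by
      rw [hK, MulAction.mem_stabilizer_iff, Subgroup.smul_def, Perm.smul_def]
      exact hga
    set M := (N.subgroupOf K).map Θ.toMonoidHom with hM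
    have hMnormal : M.Normal := (hN.subgroupOf K).map Θ.toMonoidHom Θ.surjective
    have hMb : M ≠ ⊥ := by
      intro h
      have hx : (⟨g, hgK⟩ : K) ∈ N.subgroupOf K := by
        rw [Subgroup.mem_subgroupOf]
        exact hgN
      have : Θ ⟨g, hgK⟩ ∈ M := Subgroup.mem_map_of_mem _ hx
      rw [h, Subgroup.mem_bot] at this
      have : (⟨g, hgK⟩ : K) = 1 := Θ.injective (by rw [this, map_one])
      exact hg1 (by simpa using congrArg Subtype.val this)
    have hcard' : Fintype.card {x : β // x ≠ a} = k := by rw [card_ne]; omega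
    have hMtop : M = ⊤ := IH _ hcard' M hMnormal hMb
    have hKN : K ≤ N := by
      rw [← Subgroup.subgroupOf_eq_top]
      apply Subgroup.map_injective (f := Θ.toMonoidHom) Θ.injective
      rw [Subgroup.map_top_of_surjective _ Θ.surjective]
      exact hMtop
    obtain ⟨x, y, hxy, hx, hy⟩ := exists_two_outside {a} (by
      have h4 : ({a} : Finset β).card = 1 := Finset.card_singleton _
      omega)
    obtain ⟨z, z', hzz', hz, _⟩ := exists_two_outside {a, x, y} (by
      have h1 := Finset.card_insert_le a ({x, y} : Finset β)
      have h2 := Finset.card_insert_le x ({y} : Finset β)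
      have h4 : ({y} : Finset β).card = 1 := Finset.card_singleton _
      omega)
    simp only [Finset.mem_insert, Finset.mem_singleton, not_or] at hx hy hz
    obtain ⟨hza, hzx, hzy⟩ := hz
    have hτ3 : IsThreeCycle (Equiv.swap y x * Equiv.swap y z) :=
      isThreeCycle_swap_mul_swap_same (Ne.symm hxy) (Ne.symm hzy) (Ne.symm hzx)
    have hτa : (Equiv.swap y x * Equiv.swap y z) a = a := by
      rw [Perm.mul_apply,
        Equiv.swap_apply_of_ne_of_ne (fun h => hy h.symm) (fun h => hza h.symm),
        Equiv.swap_apply_of_ne_of_ne (fun h => hy h.symm) (fun h => hx h.symm)]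
    have htK : (⟨_, hτ3.mem_alternatingGroup⟩ : alternatingGroup β) ∈ K := by
      rw [hK, MulAction.mem_stabilizer_iff, Subgroup.smul_def, Perm.smul_def]
      exact hτa
    have hcl := hτ3.alternating_normalClosure (by rwa [Nat.card_eq_fintype_card])
    rw [eq_top_iff, ← hcl]
    haveI := hN
    exact Subgroup.normalClosure_le_normal (Set.singleton_subset_iff.mpr (hKN htK))




end Stmt3Aux

open Stmt3Aux


theorem statement3 (n : ℕ) (hn : 5 ≤ n)
    (U : Subgroup (alternatingGroup (Fin n))) (hU : U.index = n) :
    (∃ α : (alternatingGroup (Fin n)) ≃* (alternatingGroup (Fin n)),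
        U.map α.toMonoidHom =
          MulAction.stabilizer (alternatingGroup (Fin n)) (⟨0, by omega⟩ : Fin n)) ∧
      Nonempty
        (↥(MulAction.stabilizer (alternatingGroup (Fin n)) (⟨0, by omega⟩ : Fin n)) ≃*
          alternatingGroup (Fin (n - 1))) := by
  set z0 : Fin n := ⟨0, by omega⟩ with hz0
  have hcardFin : Fintype.card (Fin n) = n := Fintype.card_fin n
  have h5 : 5 ≤ Fintype.card (Fin n) := by omega
  -- U is proper
  have hUtop : U ≠ ⊤ := by
    intro h
    rw [h, Subgroup.index_top] at hU
    omega
  -- the coset action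
  set φ₀ := MulAction.toPermHom (alternatingGroup (Fin n)) (alternatingGroup (Fin n) ⧸ U) with hφ₀
  have hker : φ₀.ker = ⊥ := by
    have hkn : φ₀.ker = U.normalCore := (Subgroup.normalCore_eq_ker U).symm
    by_contra h
    have : φ₀.ker = ⊤ := by
      apply alt_simple_aux (Fintype.card (Fin n)) h5 (Fin n) rfl
      · rw [hkn]; infer_instance
      · exact h
    rw [hkn] at this
    exact hUtop (top_le_iff.mp (this ▸ U.normalCore_le))
  haveI : Fintype (alternatingGroup (Fin n) ⧸ U) := Fintype.ofFinite _
  have hcardQ : Fintype.card (alternatingGroup (Fin n) ⧸ U) = n := by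
    rw [← Nat.card_eq_fintype_card]
    exact hU
  set e0 : (alternatingGroup (Fin n) ⧸ U) ≃ Fin n := Fintype.equivFinOfCardEq hcardQ with he0
  set e : (alternatingGroup (Fin n) ⧸ U) ≃ Fin n := e0.trans (Equiv.swap (e0 (QuotientGroup.mk 1)) z0) with he
  have he1 : e (QuotientGroup.mk 1) = z0 := by
    simp [he, Equiv.swap_apply_left]
  set φ : alternatingGroup (Fin n) →* Perm (Fin n) := (Stmt3Aux.permCongrHom e).toMonoidHom.comp φ₀ with hφ
  have hinj : Function.Injective φ := by
    apply Function.Injective.comp (Stmt3Aux.permCongrHom e).injective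
    exact (MonoidHom.ker_eq_bot_iff φ₀).mp hker
  -- the range of φ is the alternating group
  haveI : Nontrivial (Fin n) := Fintype.one_lt_card_iff_nontrivial.mp (by omega)
  have hcard2 : 2 * Nat.card (alternatingGroup (Fin n)) = Nat.card (Perm (Fin n)) := by
    rw [Nat.card_eq_fintype_card, Nat.card_eq_fintype_card]
    exact two_mul_card_alternatingGroup
  have hcardR : Nat.card φ.range = Nat.card (alternatingGroup (Fin n)) :=
    (Nat.card_congr (MonoidHom.ofInjective hinj).toEquiv).symm
  have hR2 : φ.range.index = 2 := by
    have h1 := Subgroup.card_mul_index φ.range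
    rw [hcardR] at h1
    have hpos : 0 < Nat.card (alternatingGroup (Fin n)) := Nat.card_pos
    nlinarith [h1, hcard2]
  have hAR : alternatingGroup (Fin n) ≤ φ.range := by
    refine le_trans (le_of_eq closure_three_cycles_eq_alternating.symm)
      ((Subgroup.closure_le _).mpr ?_)
    intro c hc
    have h3 : c ^ 3 = 1 := by
      rw [← (hc : IsThreeCycle c).orderOf]
      exact pow_orderOf_eq_one c
    have h4 : (c ^ 2) ^ 2 = c := by
      rw [← pow_mul]
      have : c ^ 4 = c ^ 3 * c := by rw [pow_succ]
      rw [show 2 * 2 = 4 from rfl, this, h3, one_mul]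
    have := Subgroup.sq_mem_of_index_two hR2 (c ^ 2)
    rwa [h4] at this
  have hRA : φ.range = alternatingGroup (Fin n) := by
    symm
    apply Subgroup.eq_of_le_of_card_ge hAR
    rw [hcardR]
  set α : alternatingGroup (Fin n) ≃* alternatingGroup (Fin n) := (MonoidHom.ofInjective hinj).trans (MulEquiv.subgroupCongr hRA) with hα
  have hαcoe : ∀ u : alternatingGroup (Fin n), ((α u : alternatingGroup (Fin n)) : Perm (Fin n)) = φ u := by
    intro u
    rw [hα]
    simp [MulEquiv.subgroupCongr_apply, MonoidHom.ofInjective_apply]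
  -- the image of U is contained in the stabilizer
  have hle : U.map α.toMonoidHom ≤ MulAction.stabilizer (alternatingGroup (Fin n)) z0 := by
    rintro _ ⟨u, huU, rfl⟩
    rw [MulAction.mem_stabilizer_iff, Subgroup.smul_def, Perm.smul_def]
    show ((α u : alternatingGroup (Fin n)) : Perm (Fin n)) z0 = z0
    rw [hαcoe u]
    show (Stmt3Aux.permCongrHom e (φ₀ u)) z0 = z0
    rw [permCongrHom_apply]
    have hsymm : e.symm z0 = QuotientGroup.mk 1 := by
      rw [← he1, Equiv.symm_apply_apply]
    have h1 : φ₀ u (QuotientGroup.mk 1) = QuotientGroup.mk u := by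
      rw [hφ₀, MulAction.toPermHom_apply, MulAction.toPerm_apply, MulAction.Quotient.smul_mk, smul_eq_mul, mul_one]
    have h2 : (QuotientGroup.mk u : alternatingGroup (Fin n) ⧸ U) = QuotientGroup.mk 1 := by
      rw [QuotientGroup.eq]
      simpa using U.inv_mem huU
    rw [hsymm, h1, h2, he1]
  -- transitivity: the stabilizer has index n
  have horb : MulAction.orbit (alternatingGroup (Fin n)) z0 = Set.univ := by
    apply Set.eq_univ_iff_forall.mpr
    intro y
    rw [MulAction.mem_orbit_iff]
    by_cases hy : y = z0
    · exact ⟨1, by simp [hy]⟩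
    · obtain ⟨z, w, hzw, hz, hw⟩ := exists_two_outside ({z0, y} : Finset (Fin n)) (by
        have h1 := Finset.card_insert_le z0 ({y} : Finset (Fin n))
        have h4 : ({y} : Finset (Fin n)).card = 1 := Finset.card_singleton _
        omega)
      simp only [Finset.mem_insert, Finset.mem_singleton, not_or] at hz hw
      obtain ⟨hz1, hz2⟩ := hz
      obtain ⟨hw1, hw2⟩ := hw
      have hmem : (Equiv.swap z0 y * Equiv.swap z w) ∈ alternatingGroup (Fin n) := by
        rw [mem_alternatingGroup, map_mul, sign_swap (Ne.symm hy), sign_swap hzw]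
        norm_num
      refine ⟨⟨_, hmem⟩, ?_⟩
      show (Equiv.swap z0 y * Equiv.swap z w) z0 = y
      rw [Perm.mul_apply,
        Equiv.swap_apply_of_ne_of_ne (fun h => hz1 h.symm) (fun h => hw1 h.symm),
        Equiv.swap_apply_left]
  have hidx2 : (MulAction.stabilizer (alternatingGroup (Fin n)) z0).index = n := by
    rw [MulAction.index_stabilizer, horb, Set.ncard_univ]
    simp
  have hidx1 : (U.map α.toMonoidHom).index = n := by
    rw [Subgroup.index_map_eq U α.surjective
      (le_trans (le_of_eq ((MonoidHom.ker_eq_bot_iff α.toMonoidHom).mpr α.injective)) bot_le)]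
    exact hU
  -- equal cardinalities force equality
  have hcards : Nat.card (U.map α.toMonoidHom) = Nat.card (MulAction.stabilizer (alternatingGroup (Fin n)) z0) := by
    have h1 := Subgroup.card_mul_index (U.map α.toMonoidHom)
    have h2 := Subgroup.card_mul_index (MulAction.stabilizer (alternatingGroup (Fin n)) z0)
    rw [hidx1] at h1
    rw [hidx2] at h2
    have hn0 : 0 < n := by omega
    exact Nat.eq_of_mul_eq_mul_right hn0 (h1.trans h2.symm)
  constructor
  · exact ⟨α, Subgroup.eq_of_le_of_card_ge hle (le_of_eq hcards.symm)⟩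
  · have e2 : {x : Fin n // x ≠ z0} ≃ Fin (n - 1) := Fintype.equivFinOfCardEq (by
      rw [card_ne (Fin n) z0, hcardFin])
    exact ⟨(stabEquiv z0).trans (altCongr e2)⟩
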